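/- Let 𝒜 be a finite set of size A, let 1 ≤ k ≤ A, let v : 𝒜 → ℝ, and let â : Fin A → 𝒜 be a bijection with v(â 1) ≥ v(â 2) ≥ … ≥ v(â A). Let T = {â 1, …, â (k−1)} be the set of top k−1 arms, let γ ≥ 0, and let p be the probability distribution on 𝒜 ∖ T (a set of size A−k+1) given by p(a) = 1/((A−k+1) + γ·(v(â k) − v(a))) for a ∈ 𝒜 ∖ T with a ≠ â k, and p(â k) = 1 − Σ_{a ∈ 𝒜∖T, a ≠ â k} p(a). Then for every injective map a : Fin k → 𝒜: (1/k)·Σ_{j=1}^k (1/p(a j))·𝟙{a j ∉ T} ≤ (A−k+1) + (γ/k)·Σ_{j=1}^k (v(â j) − v(a j)). -/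

import Mathlib

private lemma igw_filter_eq (A m : ℕ) (h : m ≤ A) :
    (Finset.univ.filter fun j : Fin A => (j : ℕ) < m)
      = Finset.univ.image (Fin.castLE h) := by
  ext i
  simp only [Finset.mem_filter, Finset.mem_univ, true_and, Finset.mem_image]
  constructor
  · intro hi
    exact ⟨⟨i, hi⟩, Fin.ext rfl⟩
  · rintro ⟨j, rfl⟩
    exact j.isLt

/-- Bound on the average inverse IGW probability over any set of `k` distinct arms: if `T` is
the set of the top `k-1` arms according to `v` and `p` is the IGW distribution over the
remaining `A-k+1` arms, then for any injective `a : Fin k → 𝒜`,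
`(1/k) Σ_j (1/p(a j)) 𝟙{a j ∉ T} ≤ (A-k+1) + (γ/k) Σ_j (v(â j) - v(a j))`. -/
theorem igw_inverse_probability_bound {α : Type*} [Fintype α] [DecidableEq α]
    (A k : ℕ) (hcard : Fintype.card α = A) (hk : 1 ≤ k) (hkA : k ≤ A)
    (v : α → ℝ) (ahat : Fin A → α) (hbij : Function.Bijective ahat)
    (hdec : ∀ i j : Fin A, i ≤ j → v (ahat j) ≤ v (ahat i))
    (T : Finset α)
    (hT : T = (Finset.univ.filter fun j : Fin A => (j : ℕ) < k - 1).image ahat)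
    (γ : ℝ) (hγ : 0 ≤ γ) (p : α → ℝ)
    (hp : ∀ b : α, b ∉ T → b ≠ ahat ⟨k - 1, by omega⟩ →
      p b = 1 / (((A : ℝ) - k + 1) + γ * (v (ahat ⟨k - 1, by omega⟩) - v b)))
    (hpk : p (ahat ⟨k - 1, by omega⟩)
      = 1 - ∑ b ∈ (Finset.univ \ T).erase (ahat ⟨k - 1, by omega⟩), p b)
    (a : Fin k → α) (ha : Function.Injective a) :
    (1 / (k : ℝ)) * ∑ j : Fin k, (1 / p (a j)) * (if a j ∈ T then (0 : ℝ) else 1)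
      ≤ ((A : ℝ) - k + 1)
        + (γ / (k : ℝ)) * ∑ j : Fin k, (v (ahat (Fin.castLE hkA j)) - v (a j)) := by
  have hA : 0 < A := lt_of_lt_of_le hk hkA
  have hK1 : k - 1 < A := by omega
  set K : Fin A := ⟨k - 1, hK1⟩ with hKdef
  have hp' : ∀ b : α, b ∉ T → b ≠ ahat K →
      p b = 1 / (((A : ℝ) - k + 1) + γ * (v (ahat K) - v b)) := hp
  have hpk' : p (ahat K) = 1 - ∑ b ∈ (Finset.univ \ T).erase (ahat K), p b := hpk
  set w : ℝ := v (ahat K) with hwdef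
  set D : ℝ := (A : ℝ) - k + 1 with hDdef
  have hkR : (1 : ℝ) ≤ (k : ℝ) := by exact_mod_cast hk
  have hD1 : (1 : ℝ) ≤ D := by
    have : (k : ℝ) ≤ (A : ℝ) := by exact_mod_cast hkA
    rw [hDdef]; linarith
  have hDpos : (0 : ℝ) < D := lt_of_lt_of_le one_pos hD1
  -- facts about T
  have hvT : ∀ b ∈ T, w ≤ v b := by
    intro b hb
    rw [hT] at hb
    obtain ⟨i, hi, rfl⟩ := Finset.mem_image.mp hb
    simp only [Finset.mem_filter, Finset.mem_univ, true_and] at hi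
    exact hdec i K (by simp only [hKdef, Fin.le_def]; omega)
  have hvnT : ∀ b ∉ T, v b ≤ w := by
    intro b hb
    obtain ⟨i, rfl⟩ := hbij.surjective b
    have hi : ¬ (i : ℕ) < k - 1 := by
      intro h
      exact hb (hT ▸ Finset.mem_image.mpr ⟨i, by simp [h], rfl⟩)
    exact hdec K i (by simp only [hKdef, Fin.le_def]; omega)
  have hKnT : ahat K ∉ T := by
    rw [hT]
    intro hmem
    obtain ⟨i, hi, he⟩ := Finset.mem_image.mp hmem
    simp only [Finset.mem_filter, Finset.mem_univ, true_and] at hi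
    have hiK : i = K := hbij.injective he
    rw [hiK] at hi
    simp only [hKdef] at hi
    omega
  -- bounds on p off-center
  have hpb : ∀ b, b ∉ T → b ≠ ahat K → 0 < p b ∧ p b ≤ 1 / D := by
    intro b hb hbK
    have h1 : 0 ≤ γ * (w - v b) := mul_nonneg hγ (by linarith [hvnT b hb])
    have h2 : D ≤ D + γ * (w - v b) := by linarith
    have h3 : 0 < D + γ * (w - v b) := lt_of_lt_of_le hDpos h2
    rw [hp' b hb hbK]
    exact ⟨one_div_pos.mpr h3, one_div_le_one_div_of_le hDpos h2⟩
  -- card facts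
  have hfiltcard : (Finset.univ.filter fun j : Fin A => (j : ℕ) < k - 1).card = k - 1 := by
    rw [igw_filter_eq A (k - 1) (by omega),
      Finset.card_image_of_injective _ (Fin.castLE_injective _)]
    simp
  have hTcard : T.card = k - 1 := by
    rw [hT, Finset.card_image_of_injective _ hbij.injective, hfiltcard]
  have hKmem : ahat K ∈ Finset.univ \ T := Finset.mem_sdiff.mpr ⟨Finset.mem_univ _, hKnT⟩
  have hEcard : ((Finset.univ \ T).erase (ahat K)).card = A - k := by
    rw [Finset.card_erase_of_mem hKmem, Finset.card_sdiff_of_subset (Finset.subset_univ T),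
      Finset.card_univ, hcard, hTcard]
    omega
  -- lower bound on p at the center
  have hpKlb : 1 / D ≤ p (ahat K) := by
    have hsum : ∑ b ∈ (Finset.univ \ T).erase (ahat K), p b
        ≤ ((Finset.univ \ T).erase (ahat K)).card • (1 / D) := by
      apply Finset.sum_le_card_nsmul
      intro b hb
      have hb1 : b ≠ ahat K := Finset.ne_of_mem_erase hb
      have hb2 : b ∉ T := (Finset.mem_sdiff.mp (Finset.mem_of_mem_erase hb)).2
      exact (hpb b hb2 hb1).2
    rw [hEcard] at hsum
    have hcast : ((A - k : ℕ) : ℝ) = (A : ℝ) - k := by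
      have := Nat.cast_sub hkA (R := ℝ); linarith
    have hsum' : ∑ b ∈ (Finset.univ \ T).erase (ahat K), p b ≤ ((A : ℝ) - k) * (1 / D) := by
      rw [nsmul_eq_mul, hcast] at hsum; exact hsum
    have heq : ((A : ℝ) - k) * (1 / D) = 1 - 1 / D := by
      have hD0 : (A : ℝ) - k + 1 ≠ 0 := hDpos.ne'
      rw [hDdef]; field_simp
      ring
    rw [hpk']
    linarith [heq ▸ hsum']
  have hpKpos : 0 < p (ahat K) := lt_of_lt_of_le (one_div_pos.mpr hDpos) hpKlb
  have hpKub : 1 / p (ahat K) ≤ D := by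
    have := one_div_le_one_div_of_le (one_div_pos.mpr hDpos) hpKlb
    rwa [one_div_one_div] at this
  -- pointwise bound
  have key : ∀ j : Fin k, (1 / p (a j)) * (if a j ∈ T then (0 : ℝ) else 1)
      ≤ (if a j ∈ T then (0 : ℝ) else D + γ * (w - v (a j))) := by
    intro j
    by_cases hj : a j ∈ T
    · simp [hj]
    · simp only [if_neg hj, mul_one]
      by_cases hjK : a j = ahat K
      · rw [hjK]
        have : w - v (ahat K) = 0 := by rw [hwdef]; ring
        rw [hjK] at *
        simp only [← hwdef, sub_self, mul_zero, add_zero]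
        exact hpKub
      · rw [hp' _ hj hjK, one_div_one_div]
  -- splitting of the upper bound
  have hsplit : ∀ j : Fin k, (if a j ∈ T then (0 : ℝ) else D + γ * (w - v (a j)))
      = (if a j ∈ T then (0 : ℝ) else D)
        + γ * ((if a j ∈ T then v (a j) else w) - v (a j)) := by
    intro j
    by_cases hj : a j ∈ T <;> simp [hj]
  -- the indicator-D sum is at most k * D
  have hsum2 : ∑ j : Fin k, (if a j ∈ T then (0 : ℝ) else D) ≤ (k : ℝ) * D := by
    calc ∑ j : Fin k, (if a j ∈ T then (0 : ℝ) else D) ≤ ∑ _j : Fin k, D :=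
          Finset.sum_le_sum fun j _ => by by_cases hj : a j ∈ T <;> simp [hj, hDpos.le]
      _ = (k : ℝ) * D := by simp [Finset.sum_const, mul_comm]
  -- the combinatorial top-k lemma
  have hset : ∑ j : Fin k, (if a j ∈ T then v (a j) else w)
      ≤ ∑ j : Fin k, v (ahat (Fin.castLE hkA j)) := by
    have hU : ∑ j : Fin k, v (ahat (Fin.castLE hkA j))
        = ∑ i ∈ Finset.univ.filter fun i : Fin A => (i : ℕ) < k, v (ahat i) := by
      rw [igw_filter_eq A k hkA,
        Finset.sum_image (fun x _ y _ h => Fin.castLE_injective _ h)]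
    have hins : (Finset.univ.filter fun i : Fin A => (i : ℕ) < k)
        = insert K (Finset.univ.filter fun i : Fin A => (i : ℕ) < k - 1) := by
      ext i
      simp only [Finset.mem_filter, Finset.mem_univ, true_and, Finset.mem_insert, hKdef,
        Fin.ext_iff]
      omega
    have hKni : K ∉ (Finset.univ.filter fun i : Fin A => (i : ℕ) < k - 1) := by
      simp [hKdef]
    have hTsum : ∑ b ∈ T, v b
        = ∑ i ∈ Finset.univ.filter fun i : Fin A => (i : ℕ) < k - 1, v (ahat i) := by
      rw [hT, Finset.sum_image (fun x _ y _ h => hbij.injective h)]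
    have hRHS : ∑ j : Fin k, v (ahat (Fin.castLE hkA j)) = w + ∑ b ∈ T, v b := by
      rw [hU, hins, Finset.sum_insert hKni, hTsum, hwdef]
    -- LHS
    set S : Finset (Fin k) := Finset.univ.filter fun j => a j ∈ T with hSdef
    set S' : Finset α := S.image a with hS'def
    have hS'T : S' ⊆ T := by
      intro b hb
      obtain ⟨j, hj, rfl⟩ := Finset.mem_image.mp hb
      exact (Finset.mem_filter.mp hj).2
    have hS'card : S'.card = S.card := Finset.card_image_of_injective _ ha
    have hm1 : S.card ≤ k - 1 := by
      rw [← hS'card, ← hTcard]; exact Finset.card_le_card hS'T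
    have hmk : S.card ≤ k := le_trans hm1 (by omega)
    have hLHS : ∑ j : Fin k, (if a j ∈ T then v (a j) else w)
        = (∑ b ∈ S', v b) + ((k - S.card : ℕ) : ℝ) * w := by
      rw [Finset.sum_ite, hS'def, Finset.sum_image (fun x _ y _ h => ha h),
        Finset.sum_const, nsmul_eq_mul]
      congr 2
      rw [Finset.filter_not, Finset.card_sdiff_of_subset (Finset.filter_subset _ _),
        Finset.card_univ, Fintype.card_fin]
    have hTsplit : (∑ b ∈ T \ S', v b) + ∑ b ∈ S', v b = ∑ b ∈ T, v b :=
      Finset.sum_sdiff hS'T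
    have hTS'card : (T \ S').card = k - 1 - S.card := by
      rw [Finset.card_sdiff_of_subset hS'T, hTcard, hS'card]
    have hlow : ((k - 1 - S.card : ℕ) : ℝ) * w ≤ ∑ b ∈ T \ S', v b := by
      have := Finset.card_nsmul_le_sum (T \ S') v w
        (fun b hb => hvT b (Finset.mem_sdiff.mp hb).1)
      rw [hTS'card, nsmul_eq_mul] at this
      exact this
    rw [hLHS, hRHS]
    have hc1 : ((k - S.card : ℕ) : ℝ) = (k : ℝ) - S.card := by
      have := Nat.cast_sub hmk (R := ℝ); linarith
    have hc2 : ((k - 1 - S.card : ℕ) : ℝ) = (k : ℝ) - 1 - S.card := by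
      have h1 : k - 1 - S.card = k - (1 + S.card) := by omega
      rw [h1, Nat.cast_sub (by omega)]
      push_cast
      ring
    rw [hc1]
    rw [hc2] at hlow
    linarith
  -- assemble
  have hsum1 : ∑ j : Fin k, (1 / p (a j)) * (if a j ∈ T then (0 : ℝ) else 1)
      ≤ ∑ j : Fin k, (if a j ∈ T then (0 : ℝ) else D + γ * (w - v (a j))) :=
    Finset.sum_le_sum fun j _ => key j
  have e1 : ∑ j : Fin k, (if a j ∈ T then (0 : ℝ) else D + γ * (w - v (a j)))
      = (∑ j : Fin k, if a j ∈ T then (0 : ℝ) else D)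
        + γ * ((∑ j : Fin k, if a j ∈ T then v (a j) else w) - ∑ j : Fin k, v (a j)) := by
    rw [Finset.sum_congr rfl fun j _ => hsplit j, Finset.sum_add_distrib, ← Finset.mul_sum,
      Finset.sum_sub_distrib]
  have hfinal : ∑ j : Fin k, (1 / p (a j)) * (if a j ∈ T then (0 : ℝ) else 1)
      ≤ (k : ℝ) * D + γ * (∑ j : Fin k, v (ahat (Fin.castLE hkA j)) - ∑ j : Fin k, v (a j)) := by
    calc ∑ j : Fin k, (1 / p (a j)) * (if a j ∈ T then (0 : ℝ) else 1)
        ≤ (∑ j : Fin k, if a j ∈ T then (0 : ℝ) else D)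
          + γ * ((∑ j : Fin k, if a j ∈ T then v (a j) else w) - ∑ j : Fin k, v (a j)) := by
          rw [← e1]; exact hsum1
      _ ≤ (k : ℝ) * D + γ * (∑ j : Fin k, v (ahat (Fin.castLE hkA j)) - ∑ j : Fin k, v (a j)) :=
          add_le_add hsum2 (mul_le_mul_of_nonneg_left (by linarith [hset]) hγ)
  have hkpos : (0 : ℝ) < (k : ℝ) := lt_of_lt_of_le one_pos hkR
  have hgoal : D + (γ / (k : ℝ)) * ∑ j : Fin k, (v (ahat (Fin.castLE hkA j)) - v (a j))
      = (1 / (k : ℝ)) * ((k : ℝ) * D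
        + γ * (∑ j : Fin k, v (ahat (Fin.castLE hkA j)) - ∑ j : Fin k, v (a j))) := by
    rw [Finset.sum_sub_distrib]
    field_simp
  rw [hgoal]
  exact mul_le_mul_of_nonneg_left hfinal (by positivity)
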